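/- Fix K' ⊆ 𝒦 with ∁K' = 𝒦∖K', let K₀ ⊆ K', and set K'' = K'∖K₀ and ∁K'' = ∁K' ∪ K₀. Then for every S ⊆ K'', I(X_{K₀∪S}; Y | X_{K'∖(K₀∪S)}, X_{∁K'}) − I(X_{K₀∪S}; Z | X_{∁K'}) = [I(X_{K₀}; Y | X_{K'∖K₀}, X_{∁K'}) − I(X_{K₀}; Z | X_{∁K'})] + [I(X_S; Y | X_{K''∖S}, X_{∁K'}) − I(X_S; Z | X_{∁K''})]. -/

import Mathlib

open MeasureTheory ProbabilityTheory BigOperators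

/-- Shannon entropy (base 2) of a finitely-valued random variable. -/
noncomputable def entropy2 {Ω : Type*} [MeasurableSpace Ω] (μ : Measure Ω)
    {α : Type*} [Fintype α] (X : Ω → α) : ℝ :=
  - ∑ a : α, ((μ (X ⁻¹' {a})).toReal * Real.logb 2 (μ (X ⁻¹' {a})).toReal)

/-- Mutual information `I(X; Y)` (base 2) of finitely-valued random variables. -/
noncomputable def mi {Ω : Type*} [MeasurableSpace Ω] (μ : Measure Ω)
    {α β : Type*} [Fintype α] [Fintype β] (X : Ω → α) (Y : Ω → β) : ℝ :=
  entropy2 μ X + entropy2 μ Y - entropy2 μ (fun ω => (X ω, Y ω))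

/-- Conditional mutual information `I(X; Y | Z)` (base 2). -/
noncomputable def cmi {Ω : Type*} [MeasurableSpace Ω] (μ : Measure Ω)
    {α β γ : Type*} [Fintype α] [Fintype β] [Fintype γ]
    (X : Ω → α) (Y : Ω → β) (Z : Ω → γ) : ℝ :=
  entropy2 μ (fun ω => (X ω, Z ω)) + entropy2 μ (fun ω => (Y ω, Z ω))
    - entropy2 μ (fun ω => (X ω, Y ω, Z ω)) - entropy2 μ Z

/-- The tuple `X_S = (X_k)_{k ∈ S}` of a family of random variables. -/
def tuple {Ω ι : Type*} {𝒳 : ι → Type*} (X : ∀ k, Ω → 𝒳 k) (S : Finset ι) :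
    Ω → ((k : S) → 𝒳 k) :=
  fun ω k => X k ω

lemma entropy2_comp_inj {Ω : Type*} [MeasurableSpace Ω] (μ : Measure Ω)
    {α β : Type*} [Fintype α] [Fintype β] (W : Ω → α) (f : α → β)
    (hf : Function.Injective f) :
    entropy2 μ (fun ω => f (W ω)) = entropy2 μ W := by
  classical
  unfold entropy2
  congr 1
  have h0 : ∀ b ∈ Finset.univ, b ∉ Finset.univ.image f →
      (μ ((fun ω => f (W ω)) ⁻¹' {b})).toReal *
        Real.logb 2 (μ ((fun ω => f (W ω)) ⁻¹' {b})).toReal = 0 := by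
    intro b _ hb
    have he : (fun ω => f (W ω)) ⁻¹' {b} = ∅ := by
      ext ω
      simp only [Set.mem_preimage, Set.mem_singleton_iff, Set.mem_empty_iff_false, iff_false]
      intro h
      exact hb (Finset.mem_image.2 ⟨W ω, Finset.mem_univ _, h⟩)
    simp [he]
  rw [← Finset.sum_subset (Finset.subset_univ _) h0,
      Finset.sum_image (fun a _ b _ h => hf h)]
  apply Finset.sum_congr rfl
  intro a _
  have hp : (fun ω => f (W ω)) ⁻¹' {f a} = W ⁻¹' {a} := by
    ext ω; simp [hf.eq_iff]
  rw [hp]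

section TupleAux

variable {Ω : Type*} [MeasurableSpace Ω] (μ : Measure Ω)
  {ι : Type*} [DecidableEq ι] {𝒳 : ι → Type*} [∀ k, Fintype (𝒳 k)]
  (X : ∀ k, Ω → 𝒳 k)

/-- the restriction/split map -/
def splitm (A B : Finset ι) :
    ((k : (A ∪ B : Finset ι)) → 𝒳 k) → ((k : A) → 𝒳 k) × ((k : B) → 𝒳 k) :=
  fun v => ((fun k => v ⟨k.1, Finset.mem_union_left B k.2⟩),
            (fun k => v ⟨k.1, Finset.mem_union_right A k.2⟩))

lemma splitm_inj (A B : Finset ι) : Function.Injective (splitm (𝒳 := 𝒳) A B) := by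
  intro v w h
  funext ⟨k, hk⟩
  rcases Finset.mem_union.1 hk with h1 | h1
  · exact congrFun (congrArg Prod.fst h) ⟨k, h1⟩
  · exact congrFun (congrArg Prod.snd h) ⟨k, h1⟩

lemma ent_tuple_pair (A B : Finset ι) :
    entropy2 μ (fun ω => (tuple X A ω, tuple X B ω)) = entropy2 μ (tuple X (A ∪ B)) :=
  entropy2_comp_inj μ (tuple X (A ∪ B)) (splitm A B) (splitm_inj A B)

lemma ent_V_pair {β : Type*} [Fintype β] (V : Ω → β) (A B : Finset ι) :
    entropy2 μ (fun ω => (V ω, (tuple X A ω, tuple X B ω)))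
      = entropy2 μ (fun ω => (V ω, tuple X (A ∪ B) ω)) :=
  entropy2_comp_inj μ (fun ω => (V ω, tuple X (A ∪ B) ω))
    (fun p => (p.1, splitm A B p.2))
    (by
      intro p q h
      simp only [Prod.mk.injEq] at h
      exact Prod.ext h.1 (splitm_inj A B h.2))

lemma ent_VV_pair {β γ : Type*} [Fintype β] [Fintype γ] (T : Ω → γ) (V : Ω → β)
    (A B : Finset ι) :
    entropy2 μ (fun ω => (T ω, V ω, (tuple X A ω, tuple X B ω)))
      = entropy2 μ (fun ω => (T ω, V ω, tuple X (A ∪ B) ω)) :=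
  entropy2_comp_inj μ (fun ω => (T ω, V ω, tuple X (A ∪ B) ω))
    (fun p => (p.1, p.2.1, splitm A B p.2.2))
    (by
      intro p q h
      simp only [Prod.mk.injEq] at h
      exact Prod.ext h.1 (Prod.ext h.2.1 (splitm_inj A B h.2.2)))

lemma ent_tvt {β : Type*} [Fintype β] (V : Ω → β) (A B : Finset ι) :
    entropy2 μ (fun ω => (tuple X A ω, V ω, tuple X B ω))
      = entropy2 μ (fun ω => (V ω, tuple X (A ∪ B) ω)) :=
  entropy2_comp_inj μ (fun ω => (V ω, tuple X (A ∪ B) ω))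
    (fun p => ((splitm A B p.2).1, p.1, (splitm A B p.2).2))
    (by
      intro p q h
      simp only [Prod.mk.injEq] at h
      have h2 : splitm A B p.2 = splitm A B q.2 := Prod.ext h.1 h.2.2
      exact Prod.ext h.2.1 (splitm_inj A B h2))

lemma cmi_pair {β γ : Type*} [Fintype β] [Fintype γ] (T : Ω → γ) (V : Ω → β)
    (A B : Finset ι) :
    cmi μ T V (fun ω => (tuple X A ω, tuple X B ω)) = cmi μ T V (tuple X (A ∪ B)) := by
  simp only [cmi]
  rw [ent_V_pair μ X T A B, ent_V_pair μ X V A B, ent_VV_pair μ X T V A B,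
      ent_tuple_pair μ X A B]

lemma cmi_tuple {β : Type*} [Fintype β] (V : Ω → β) (A B : Finset ι) :
    cmi μ (tuple X A) V (tuple X B)
      = entropy2 μ (tuple X (A ∪ B)) + entropy2 μ (fun ω => (V ω, tuple X B ω))
        - entropy2 μ (fun ω => (V ω, tuple X (A ∪ B) ω)) - entropy2 μ (tuple X B) := by
  simp only [cmi]
  rw [ent_tuple_pair μ X A B, ent_tvt μ X V A B]

end TupleAux

theorem stmt_6
    {Ω : Type} [MeasurableSpace Ω] (μ : Measure Ω) [IsProbabilityMeasure μ]
    {K : ℕ} (hK : 0 < K)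
    {𝒳 : Fin K → Type} [∀ k, Fintype (𝒳 k)] [∀ k, MeasurableSpace (𝒳 k)]
    (X : ∀ k, Ω → 𝒳 k) (hX : ∀ k, Measurable (X k))
    {𝒴 𝒵 : Type} [Fintype 𝒴] [MeasurableSpace 𝒴] [Fintype 𝒵] [MeasurableSpace 𝒵]
    (Y : Ω → 𝒴) (hY : Measurable Y) (Z : Ω → 𝒵) (hZ : Measurable Z)
    (hIndep : iIndepFun X μ)
    (K' : Finset (Fin K)) (K₀ : Finset (Fin K)) (hK₀ : K₀ ⊆ K') :
    ∀ S ⊆ K' \ K₀,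
      cmi μ (tuple X (K₀ ∪ S)) Y
          (fun ω => (tuple X (K' \ (K₀ ∪ S)) ω, tuple X K'ᶜ ω))
        - cmi μ (tuple X (K₀ ∪ S)) Z (tuple X K'ᶜ)
      = (cmi μ (tuple X K₀) Y (fun ω => (tuple X (K' \ K₀) ω, tuple X K'ᶜ ω))
          - cmi μ (tuple X K₀) Z (tuple X K'ᶜ))
        + (cmi μ (tuple X S) Y
            (fun ω => (tuple X ((K' \ K₀) \ S) ω, tuple X K'ᶜ ω))
          - cmi μ (tuple X S) Z (tuple X (K'ᶜ ∪ K₀))) := by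
  intro S hS
  have hS' : S ⊆ K' \ K₀ := hS
  have hA : K₀ ∪ S ⊆ K' :=
    Finset.union_subset hK₀ (hS'.trans (Finset.sdiff_subset))
  have e3 : (K' \ K₀) \ S = K' \ (K₀ ∪ S) := by
    ext k; simp only [Finset.mem_sdiff, Finset.mem_union]; tauto
  have e1 : (K₀ ∪ S) ∪ (K' \ (K₀ ∪ S) ∪ K'ᶜ) = (Finset.univ : Finset (Fin K)) := by
    rw [← Finset.union_assoc, Finset.union_sdiff_of_subset hA, Finset.union_compl]
  have e2 : K₀ ∪ (K' \ K₀ ∪ K'ᶜ) = (Finset.univ : Finset (Fin K)) := by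
    rw [← Finset.union_assoc, Finset.union_sdiff_of_subset hK₀, Finset.union_compl]
  have e4 : S ∪ (K' \ (K₀ ∪ S) ∪ K'ᶜ) = K' \ K₀ ∪ K'ᶜ := by
    rw [← Finset.union_assoc, ← e3, Finset.union_sdiff_of_subset hS']
  have e5 : K'ᶜ ∪ K₀ = K₀ ∪ K'ᶜ := Finset.union_comm _ _
  have e6 : S ∪ (K₀ ∪ K'ᶜ) = (K₀ ∪ S) ∪ K'ᶜ := by
    rw [← Finset.union_assoc, Finset.union_comm S K₀]
  rw [e3, e5]
  rw [cmi_pair μ X, cmi_pair μ X, cmi_pair μ X]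
  rw [cmi_tuple μ X, cmi_tuple μ X, cmi_tuple μ X, cmi_tuple μ X, cmi_tuple μ X,
      cmi_tuple μ X]
  rw [e1, e2, e4, e6]
  ring
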